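/- Let X be a discrete real random variable with countable support 𝒳, pmf p_X, and E[X] = 0. Then for every t > 0 and every integer M ≥ 2, P(|X| ≥ t/2) ≥ V_t{ (M − ∑_{x ∈ X̄(t)} max_{k∈[0:M−1]} p_X(x + kt)) / (M−1) }, where X̄(t) = ⋃_{j=0}^{M−1} (𝒳 − jt) and the valley-filling V_t is taken of the function of t given by the expression in braces. -/

import Mathlib

open MeasureTheory ENNReal


/-- The clipped nearest-integer decision rule used in the Ziv–Zakai argument. -/
noncomputable def zzKhat (M : ℕ) (u x : ℝ) : ℕ :=
  (max 0 (min ((M : ℤ) - 1) ⌊(1:ℝ)/2 - x/u⌋)).toNat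

lemma zzKhat_lt {M : ℕ} (hM : 1 ≤ M) (u x : ℝ) : zzKhat M u x < M := by
  have h1 : max 0 (min ((M : ℤ) - 1) ⌊(1:ℝ)/2 - x/u⌋) ≤ (M : ℤ) - 1 := by
    apply max_le
    · omega
    · exact min_le_left _ _
  unfold zzKhat
  omega

lemma zzKhat_eq {M k : ℕ} (hk : k < M) {u y : ℝ} (hu : 0 < u) (hy : |y| < u/2) :
    zzKhat M u (y - (k : ℝ) * u) = k := by
  have hne : u ≠ 0 := ne_of_gt hu
  obtain ⟨hy1, hy2⟩ := abs_lt.mp hy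
  have hfloor : ⌊(1:ℝ)/2 - (y - (k : ℝ)*u)/u⌋ = (k : ℤ) := by
    have heq : (1:ℝ)/2 - (y - (k : ℝ)*u)/u = (k : ℤ) + ((1:ℝ)/2 - y/u) := by
      push_cast
      field_simp
      ring
    rw [heq, Int.floor_eq_iff]
    constructor
    · have : y/u < 1/2 := by rw [div_lt_iff₀ hu]; linarith
      linarith
    · have : -(1/2) < y/u := by rw [lt_div_iff₀ hu]; linarith
      push_cast
      linarith
  unfold zzKhat
  rw [hfloor]
  omega

lemma zzKhat_exists {M : ℕ} (hM : 1 ≤ M) {u y : ℝ} (hu : 0 < u) (hy : u/2 ≤ |y|) :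
    ∃ k : ℕ, k < M ∧ zzKhat M u (y - (k : ℝ) * u) = k := by
  rcases le_abs.mp hy with h | h
  · refine ⟨0, by omega, ?_⟩
    have hf : ⌊(1:ℝ)/2 - (y - ((0:ℕ):ℝ) * u)/u⌋ ≤ 0 := by
      have h0 : (1:ℝ)/2 - (y - ((0:ℕ):ℝ)*u)/u ≤ 0 := by
        have : (1:ℝ)/2 ≤ y/u := by rw [le_div_iff₀ hu]; linarith
        norm_num
        linarith
      calc ⌊(1:ℝ)/2 - (y - ((0:ℕ):ℝ) * u)/u⌋ ≤ ⌊(0:ℝ)⌋ := Int.floor_le_floor h0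
        _ = 0 := Int.floor_zero
    unfold zzKhat
    omega
  · refine ⟨M - 1, by omega, ?_⟩
    have hf : (M : ℤ) ≤ ⌊(1:ℝ)/2 - (y - ((M-1 : ℕ) : ℝ) * u)/u⌋ := by
      apply Int.le_floor.mpr
      have hc : ((M-1 : ℕ) : ℝ) = (M : ℝ) - 1 := by
        push_cast [hM]
        ring
      have h1 : (1:ℝ)/2 ≤ -y/u := by rw [le_div_iff₀ hu]; linarith
      rw [hc]
      have h2 : (1:ℝ)/2 - (y - ((M:ℝ)-1)*u)/u = 1/2 + (-y/u) + ((M:ℝ) - 1) := by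
        field_simp
        ring
      rw [h2]
      push_cast
      linarith
    unfold zzKhat
    omega

/-- **Valley-filled Ziv–Zakai lower bound on tail probabilities for a discrete input
(inequality (27) in the proof of Theorem 4).** For a discrete real random variable `X`
with countable support `𝒳`, pmf `p_X` and `E[X] = 0`, for every `t > 0` and `M ≥ 2`,
`P(|X| ≥ t/2) ≥ V_t{ (M − ∑_{x ∈ X̄(t)} max_k p_X(x + kt)) / (M−1) }`,
where `X̄(u) = ⋃_{j=0}^{M−1} (𝒳 − ju)` and `V_t` is the valley-filling function. -/
theorem discrete_tail_prob_ge_valley_filled_bound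
    (P : Measure ℝ) [IsProbabilityMeasure P]
    (hcount : Set.Countable {x : ℝ | P {x} ≠ 0})
    (hdisc : P {x : ℝ | P {x} ≠ 0}ᶜ = 0)
    (hint : Integrable (fun x => x) P)
    (hmean : ∫ x, x ∂P = 0)
    (t : ℝ) (ht : 0 < t) (M : ℕ) (hM : 2 ≤ M) :
    (⨆ (u : ℝ) (_ : t ≤ u),
        ((M : ℝ≥0∞) -
            ∑' x : ↥(⋃ j : Fin M, (fun z => z - (j : ℝ) * u) '' {x : ℝ | P {x} ≠ 0}),
              ⨆ k : Fin M, P {(x : ℝ) + (k : ℝ) * u}) /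
          ((M : ℝ≥0∞) - 1))
      ≤ P {x : ℝ | t / 2 ≤ |x|} := by
  have hM1 : 1 ≤ M := by omega
  apply iSup_le; intro u
  apply iSup_le; intro htu
  have hu : 0 < u := lt_of_lt_of_le ht htu
  set D := {x : ℝ | P {x} ≠ 0} with hDdef
  set Xb := ⋃ j : Fin M, (fun z => z - (j : ℝ) * u) '' D with hXbdef
  -- measure of a countable set is the sum of its atoms
  have key : ∀ s : Set ℝ, s.Countable → P s = ∑' y : s, P {(y : ℝ)} := by
    intro s hs
    conv_lhs => rw [← Set.biUnion_of_singleton s]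
    exact measure_biUnion hs
      (fun a _ b _ hab => Set.disjoint_singleton.mpr hab)
      (fun b _ => measurableSet_singleton b)
  have hPD : P D = 1 := by
    have hDm : MeasurableSet D := hcount.measurableSet
    have h := measure_add_measure_compl (μ := P) hDm
    rw [hdisc, add_zero, measure_univ] at h
    exact h
  -- the decision rule, as an element of `Fin M`
  set kh : ℝ → Fin M := fun x => ⟨zzKhat M u x, zzKhat_lt hM1 u x⟩ with hkh
  -- Step 2 : each shifted copy of the support carries full mass
  have step2 : ∀ k : Fin M, (1 : ℝ≥0∞) ≤ ∑' x : Xb, P {(x : ℝ) + (k : ℝ) * u} := by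
    intro k
    have h1 : (1 : ℝ≥0∞) = ∑' y : D, P {(y : ℝ)} := by rw [← key D hcount, hPD]
    rw [h1]
    have hmem : ∀ y : D, (y : ℝ) - (k : ℝ) * u ∈ Xb :=
      fun y => Set.mem_iUnion.mpr ⟨k, ⟨(y : ℝ), y.2, rfl⟩⟩
    refine Summable.tsum_le_tsum_of_inj (fun y : D => (⟨(y : ℝ) - (k : ℝ) * u, hmem y⟩ : Xb))
      ?_ (fun _ _ => zero_le) ?_ ENNReal.summable ENNReal.summable
    · intro a b hab
      have h2 := congrArg Subtype.val hab
      simp only [sub_left_inj] at h2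
      exact Subtype.ext h2
    · intro y
      simp
  set S := ∑' x : Xb, ⨆ k : Fin M, P {(x : ℝ) + (k : ℝ) * u} with hS
  set R := ∑' x : Xb, ∑ k : Fin M,
      (if k = kh (x : ℝ) then 0 else P {(x : ℝ) + (k : ℝ) * u}) with hR
  -- splitting the finite sum at the decision index
  have split : ∀ x : ℝ, (∑ k : Fin M, P {x + (k : ℝ) * u})
      = P {x + ((kh x : ℕ) : ℝ) * u}
        + ∑ k : Fin M, (if k = kh x then 0 else P {x + (k : ℝ) * u}) := by
    intro x
    have h1 : ∀ k : Fin M, P {x + (k : ℝ) * u}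
        = (if k = kh x then P {x + (k : ℝ) * u} else 0)
          + (if k = kh x then 0 else P {x + (k : ℝ) * u}) := by
      intro k; by_cases h : k = kh x <;> simp [h]
    rw [Finset.sum_congr rfl fun k _ => h1 k, Finset.sum_add_distrib]
    congr 1
    rw [Finset.sum_ite_eq' Finset.univ (kh x) (fun k : Fin M => P {x + (k : ℝ) * u})]
    simp
  -- the "error" set
  set B := {y : ℝ | u/2 ≤ |y|} ∩ D with hBdef
  have hBc : B.Countable := hcount.mono Set.inter_subset_right
  -- per-hypothesis bound
  have perk : ∀ k : Fin M,
      (∑' x : Xb, (if k = kh (x : ℝ) then 0 else P {(x : ℝ) + (k : ℝ) * u}))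
      ≤ ∑' y : B, (if k = kh ((y : ℝ) - (k : ℝ) * u) then 0 else P {(y : ℝ)}) := by
    intro k
    calc ∑' x : Xb, (if k = kh (x : ℝ) then 0 else P {(x : ℝ) + (k : ℝ) * u})
        = ∑' x : ℝ, Xb.indicator
            (fun x => if k = kh x then 0 else P {x + (k : ℝ) * u}) x :=
          tsum_subtype Xb (fun x => if k = kh x then 0 else P {x + (k : ℝ) * u})
      _ = ∑' y : ℝ, Xb.indicator
            (fun x => if k = kh x then 0 else P {x + (k : ℝ) * u}) (y - (k : ℝ) * u) :=
          (Equiv.tsum_eq (Equiv.subRight ((k : ℝ) * u)) _).symm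
      _ ≤ ∑' y : ℝ, B.indicator
            (fun y => if k = kh (y - (k : ℝ) * u) then 0 else P {y}) y := by
          refine Summable.tsum_le_tsum (fun y => ?_) ENNReal.summable ENNReal.summable
          by_cases hyX : y - (k : ℝ) * u ∈ Xb
          · rw [Set.indicator_of_mem hyX]
            by_cases hk : k = kh (y - (k : ℝ) * u)
            · rw [if_pos hk]; exact zero_le
            · rw [if_neg hk]
              have hyy : y - (k : ℝ) * u + (k : ℝ) * u = y := by ring
              rw [hyy]
              by_cases hpy : P {y} = 0
              · simp [hpy]
              · have hyD : y ∈ D := hpy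
                have hbig : u/2 ≤ |y| := by
                  by_contra hsmall
                  push_neg at hsmall
                  exact hk (Fin.ext (zzKhat_eq k.2 hu hsmall).symm)
                rw [Set.indicator_of_mem (show y ∈ B from ⟨hbig, hyD⟩), if_neg hk]
          · simp [Set.indicator_of_notMem hyX]
      _ = ∑' y : B, (if k = kh ((y : ℝ) - (k : ℝ) * u) then 0 else P {(y : ℝ)}) :=
          (tsum_subtype B (fun y => if k = kh (y - (k : ℝ) * u) then 0 else P {y})).symm
  -- per-point bound on the error set
  have pery : ∀ y : B,
      (∑ k : Fin M, if k = kh ((y : ℝ) - (k : ℝ) * u) then 0 else P {(y : ℝ)})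
      ≤ ((M - 1 : ℕ) : ℝ≥0∞) * P {(y : ℝ)} := by
    intro y
    obtain ⟨k0n, hk0n, hk0⟩ := zzKhat_exists hM1 hu y.2.1
    set k0 : Fin M := ⟨k0n, hk0n⟩ with hk0def
    have hzero : (if k0 = kh ((y : ℝ) - (k0 : ℝ) * u) then 0 else P {(y : ℝ)}) = 0 :=
      if_pos (Fin.ext hk0.symm)
    calc ∑ k : Fin M, (if k = kh ((y : ℝ) - (k : ℝ) * u) then 0 else P {(y : ℝ)})
        = ∑ k ∈ Finset.univ.erase k0,
            (if k = kh ((y : ℝ) - (k : ℝ) * u) then 0 else P {(y : ℝ)})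
          + (if k0 = kh ((y : ℝ) - (k0 : ℝ) * u) then 0 else P {(y : ℝ)}) :=
          (Finset.sum_erase_add _ _ (Finset.mem_univ k0)).symm
      _ = ∑ k ∈ Finset.univ.erase k0,
            (if k = kh ((y : ℝ) - (k : ℝ) * u) then 0 else P {(y : ℝ)}) := by
          rw [hzero, add_zero]
      _ ≤ ∑ _k ∈ Finset.univ.erase k0, P {(y : ℝ)} :=
          Finset.sum_le_sum (fun k _ => by split <;> simp)
      _ = ((M - 1 : ℕ) : ℝ≥0∞) * P {(y : ℝ)} := by
          rw [Finset.sum_const, Finset.card_erase_of_mem (Finset.mem_univ k0)]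
          simp [nsmul_eq_mul]
  -- the total error bound
  have hRle : R ≤ ((M : ℝ≥0∞) - 1) * P {x : ℝ | u / 2 ≤ |x|} := by
    calc R = ∑ k : Fin M, ∑' x : Xb,
            (if k = kh (x : ℝ) then 0 else P {(x : ℝ) + (k : ℝ) * u}) :=
          Summable.tsum_finsetSum (fun _ _ => ENNReal.summable)
      _ ≤ ∑ k : Fin M, ∑' y : B,
            (if k = kh ((y : ℝ) - (k : ℝ) * u) then 0 else P {(y : ℝ)}) :=
          Finset.sum_le_sum fun k _ => perk k
      _ = ∑' y : B, ∑ k : Fin M,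
            (if k = kh ((y : ℝ) - (k : ℝ) * u) then 0 else P {(y : ℝ)}) :=
          (Summable.tsum_finsetSum (fun _ _ => ENNReal.summable)).symm
      _ ≤ ∑' y : B, ((M - 1 : ℕ) : ℝ≥0∞) * P {(y : ℝ)} :=
          Summable.tsum_le_tsum pery ENNReal.summable ENNReal.summable
      _ = ((M - 1 : ℕ) : ℝ≥0∞) * ∑' y : B, P {(y : ℝ)} := ENNReal.tsum_mul_left
      _ = ((M - 1 : ℕ) : ℝ≥0∞) * P B := by rw [← key B hBc]
      _ ≤ ((M : ℝ≥0∞) - 1) * P {x : ℝ | u / 2 ≤ |x|} := by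
          have hc : ((M - 1 : ℕ) : ℝ≥0∞) = (M : ℝ≥0∞) - 1 := by
            rw [ENNReal.natCast_sub, Nat.cast_one]
          rw [hc]
          exact mul_le_mul_right (measure_mono Set.inter_subset_left) _
  -- the main inequality
  have main : (M : ℝ≥0∞) ≤ S + ((M : ℝ≥0∞) - 1) * P {x : ℝ | u / 2 ≤ |x|} := by
    calc (M : ℝ≥0∞) = ∑ _k : Fin M, (1 : ℝ≥0∞) := by simp
      _ ≤ ∑ k : Fin M, ∑' x : Xb, P {(x : ℝ) + (k : ℝ) * u} :=
          Finset.sum_le_sum fun k _ => step2 k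
      _ = ∑' x : Xb, ∑ k : Fin M, P {(x : ℝ) + (k : ℝ) * u} :=
          (Summable.tsum_finsetSum (fun _ _ => ENNReal.summable)).symm
      _ = ∑' x : Xb, (P {(x : ℝ) + ((kh (x : ℝ) : ℕ) : ℝ) * u}
            + ∑ k : Fin M, (if k = kh (x : ℝ) then 0 else P {(x : ℝ) + (k : ℝ) * u})) :=
          tsum_congr fun x => split (x : ℝ)
      _ = (∑' x : Xb, P {(x : ℝ) + ((kh (x : ℝ) : ℕ) : ℝ) * u}) + R := ENNReal.tsum_add
      _ ≤ S + R := by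
          refine add_le_add_left (Summable.tsum_le_tsum (fun x => ?_) ENNReal.summable ENNReal.summable) R
          exact le_iSup (fun k : Fin M => P {(x : ℝ) + (k : ℝ) * u}) (kh (x : ℝ))
      _ ≤ S + ((M : ℝ≥0∞) - 1) * P {x : ℝ | u / 2 ≤ |x|} := add_le_add_right hRle S
  -- conclude
  have hq : P {x : ℝ | u / 2 ≤ |x|} ≤ P {x : ℝ | t / 2 ≤ |x|} := by
    refine measure_mono fun x hx => ?_
    simp only [Set.mem_setOf_eq] at hx ⊢
    linarith
  refine le_trans ?_ hq
  apply ENNReal.div_le_of_le_mul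
  refine tsub_le_iff_left.mpr ?_
  calc (M : ℝ≥0∞) ≤ S + ((M : ℝ≥0∞) - 1) * P {x : ℝ | u / 2 ≤ |x|} := main
    _ = S + P {x : ℝ | u / 2 ≤ |x|} * ((M : ℝ≥0∞) - 1) := by rw [mul_comm]
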